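/- Assume U : ℝ^d → ℝ is twice continuously differentiable with sup_{x∈ℝ^d} ‖∇²U(x)‖ ≤ L₁ < ∞. Then for every T ∈ ℕ* there exists h₀ > 0 (depending only on T and L₁) such that for all h ∈ (0,h₀) and all q ∈ ℝ^d, the map p ↦ Φ_h^{∘T,q}(q,p) is a continuously differentiable diffeomorphism from ℝ^d onto ℝ^d. -/

import Mathlib

open Real
set_option maxHeartbeats 1000000
noncomputable section

/-- One leapfrog (Störmer–Verlet) step for the potential `U` with step size `h`. -/
def leapfrog {d : ℕ} (U : EuclideanSpace ℝ (Fin d) → ℝ) (h : ℝ)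
    (x : EuclideanSpace ℝ (Fin d) × EuclideanSpace ℝ (Fin d)) :
    EuclideanSpace ℝ (Fin d) × EuclideanSpace ℝ (Fin d) :=
  let p2 := x.2 - (h / 2) • gradient U x.1
  let q' := x.1 + h • p2
  (q', p2 - (h / 2) • gradient U q')

private lemma grad_contDiff {d : ℕ} {U : EuclideanSpace ℝ (Fin d) → ℝ}
    (hU : ContDiff ℝ 2 U) : ContDiff ℝ 1 (gradient U) := by
  have h1 : ContDiff ℝ 1 (fderiv ℝ U) := hU.fderiv_right (by norm_num)
  have h2 : gradient U = fun x => (InnerProductSpace.toDual ℝ _).symm (fderiv ℝ U x) := rfl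
  rw [h2]
  exact (InnerProductSpace.toDual ℝ _).symm.contDiff.comp h1

private lemma grad_lip {d : ℕ} {U : EuclideanSpace ℝ (Fin d) → ℝ} {L : ℝ}
    (hU : ContDiff ℝ 2 U) (hL : 0 ≤ L) (hb : ∀ x, ‖iteratedFDeriv ℝ 2 U x‖ ≤ L) :
    ∀ x y, dist (gradient U x) (gradient U y) ≤ L * dist x y := by
  have h1 : ContDiff ℝ 1 (fderiv ℝ U) := hU.fderiv_right (by norm_num)
  have hf : LipschitzWith L.toNNReal (fderiv ℝ U) := by
    apply lipschitzWith_of_nnnorm_fderiv_le (h1.differentiable one_ne_zero)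
    intro x
    rw [← norm_toNNReal]
    apply Real.toNNReal_mono
    have e1 : ‖iteratedFDeriv ℝ 1 (fderiv ℝ U) x‖ = ‖iteratedFDeriv ℝ 2 U x‖ :=
      norm_iteratedFDeriv_fderiv
    have e2 : ‖iteratedFDeriv ℝ 1 (fderiv ℝ U) x‖ = ‖fderiv ℝ (fderiv ℝ U) x‖ := by
      rw [iteratedFDeriv_succ_eq_comp_right]
      simp [iteratedFDeriv_zero_eq_comp]
      rw [LinearIsometryEquiv.norm_map]
      exact ContinuousMultilinearMap.uncurry0_norm _ _ _
    rw [← e2, e1]; exact hb x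
  intro x y
  have h3 : dist (gradient U x) (gradient U y) = dist (fderiv ℝ U x) (fderiv ℝ U y) := by
    simp only [gradient]
    exact (InnerProductSpace.toDual ℝ _).symm.isometry.dist_eq _ _
  rw [h3]
  calc dist (fderiv ℝ U x) (fderiv ℝ U y) ≤ L.toNNReal * dist x y := hf.dist_le_mul x y
    _ = L * dist x y := by rw [Real.coe_toNNReal _ hL]

private lemma num_aux {K Tr h c : ℝ} (hK : 0 ≤ K) (hKT : K + 1 ≤ Tr) (hh : 0 < h)
    (hh1 : h ≤ 1) (hc : 0 ≤ c) (hsm : 10 * Tr ^ 2 * h * (c + 1) ≤ 1) :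
    5 * K ^ 3 * h ^ 3 * c ≤ K * h ∧
    5 * (K + 1) ^ 3 * h ^ 3 * c ≤ (K + 1) * h ∧
    5 * K ^ 3 * h ^ 3 * c + h * (3 * K ^ 2 * h ^ 2 * c)
        + h ^ 2 / 2 * c * (K * h + 5 * K ^ 3 * h ^ 3 * c) ≤ 5 * (K + 1) ^ 3 * h ^ 3 * c ∧
    3 * K ^ 2 * h ^ 2 * c + h / 2 * c * (K * h + 5 * K ^ 3 * h ^ 3 * c)
        + h / 2 * c * ((K + 1) * h + 5 * (K + 1) ^ 3 * h ^ 3 * c)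
      ≤ 3 * (K + 1) ^ 2 * h ^ 2 * c := by
  have hTr : 0 < Tr := by linarith
  have hsq : (K + 1) ^ 2 ≤ Tr ^ 2 := by nlinarith
  have s1 : (K + 1) ^ 2 * (h ^ 2 * c) ≤ Tr ^ 2 * (h ^ 2 * c) :=
    mul_le_mul_of_nonneg_right hsq (by positivity)
  have s2 : h ^ 2 * c ≤ h * c := by
    have : h ^ 2 ≤ h := by nlinarith
    exact mul_le_mul_of_nonneg_right this hc
  have s3 : Tr ^ 2 * (h ^ 2 * c) ≤ Tr ^ 2 * (h * c) :=
    mul_le_mul_of_nonneg_left s2 (by positivity)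
  have s4 : 10 * (Tr ^ 2 * (h * c)) ≤ 1 := by
    have pos : 0 < Tr ^ 2 * h := by positivity
    nlinarith [pos]
  have e2 : 5 * (K + 1) ^ 2 * h ^ 2 * c ≤ 1 / 2 := by nlinarith [s1, s3, s4]
  have e2' : 5 * K ^ 2 * h ^ 2 * c ≤ 1 / 2 := by
    have t : K ^ 2 * (h ^ 2 * c) ≤ (K + 1) ^ 2 * (h ^ 2 * c) :=
      mul_le_mul_of_nonneg_right (by nlinarith) (by positivity)
    nlinarith [t]
  have h1 : 5 * K ^ 3 * h ^ 3 * c ≤ K * h := by nlinarith [mul_nonneg hK hh.le]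
  have h2 : 5 * (K + 1) ^ 3 * h ^ 3 * c ≤ (K + 1) * h := by
    nlinarith [mul_nonneg (by linarith : (0:ℝ) ≤ K + 1) hh.le]
  refine ⟨h1, h2, ?_, ?_⟩
  · have t1 : h ^ 2 / 2 * c * (K * h + 5 * K ^ 3 * h ^ 3 * c)
        ≤ h ^ 2 / 2 * c * (2 * (K * h)) :=
      mul_le_mul_of_nonneg_left (by linarith) (by positivity)
    linarith [t1, mul_nonneg (mul_nonneg (pow_nonneg hh.le 3) hc) hK,
      mul_nonneg (mul_nonneg (mul_nonneg (pow_nonneg hh.le 3) hc) hK) hK,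
      mul_nonneg (pow_nonneg hh.le 3) hc]
  · have t1 : h / 2 * c * (K * h + 5 * K ^ 3 * h ^ 3 * c) ≤ h / 2 * c * (2 * (K * h)) :=
      mul_le_mul_of_nonneg_left (by linarith) (by positivity)
    have t2 : h / 2 * c * ((K + 1) * h + 5 * (K + 1) ^ 3 * h ^ 3 * c)
        ≤ h / 2 * c * (2 * ((K + 1) * h)) :=
      mul_le_mul_of_nonneg_left (by linarith) (by positivity)
    linarith [t1, t2, mul_nonneg (mul_nonneg (sq_nonneg h) hc) hK,
      mul_nonneg (sq_nonneg h) hc]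

private lemma lip_of_residual {E : Type*} [NormedAddCommGroup E] [NormedSpace ℝ E]
    (f : E → E) (s C : ℝ) (hs : 0 ≤ s)
    (hres : ∀ x y, dist (f x - s • x) (f y - s • y) ≤ C * dist x y) :
    ∀ x y, dist (f x) (f y) ≤ (s + C) * dist x y := by
  intro x y
  have e : ∀ p : E, f p = (f p - s • p) + s • p := fun p => by module
  rw [e x, e y]
  calc dist ((f x - s • x) + s • x) ((f y - s • y) + s • y)
      ≤ dist (f x - s • x) (f y - s • y) + dist (s • x) (s • y) := dist_add_add_le _ _ _ _
    _ ≤ C * dist x y + s * dist x y := by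
        rw [dist_smul₀, Real.norm_eq_abs, abs_of_nonneg hs]
        exact add_le_add (hres x y) le_rfl
    _ = (s + C) * dist x y := by ring

/-- if `U` is C² with uniformly bounded Hessian, then for small enough
step sizes `h` the map `p ↦ Φ_h^{∘T,q}(q,p)` is a C¹ diffeomorphism of `ℝ^d`,
with threshold `h₀` depending only on `T` and `L₁`. -/
theorem leapfrog_position_map_diffeomorphism (T : ℕ) (hT : 1 ≤ T) (L₁ : ℝ) (hL₁ : 0 ≤ L₁) :
    ∃ h₀ > (0 : ℝ),
      ∀ (d : ℕ) (U : EuclideanSpace ℝ (Fin d) → ℝ),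
        ContDiff ℝ 2 U →
        (∀ x : EuclideanSpace ℝ (Fin d), ‖iteratedFDeriv ℝ 2 U x‖ ≤ L₁) →
        ∀ h ∈ Set.Ioo (0 : ℝ) h₀, ∀ q : EuclideanSpace ℝ (Fin d),
          ∃ g : EuclideanSpace ℝ (Fin d) → EuclideanSpace ℝ (Fin d),
            ContDiff ℝ 1 (fun p : EuclideanSpace ℝ (Fin d) =>
              ((leapfrog U h)^[T] (q, p)).1) ∧
            ContDiff ℝ 1 g ∧
            Function.LeftInverse g (fun p : EuclideanSpace ℝ (Fin d) =>
              ((leapfrog U h)^[T] (q, p)).1) ∧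
            Function.RightInverse g (fun p : EuclideanSpace ℝ (Fin d) =>
              ((leapfrog U h)^[T] (q, p)).1) := by
  have hT0 : (0:ℝ) < (T:ℝ) := by exact_mod_cast Nat.pos_of_ne_zero (by omega)
  refine ⟨min 1 (1 / (10 * (T:ℝ) ^ 2 * (L₁ + 1))), lt_min one_pos (by positivity), ?_⟩
  intro d U hU hb h hh q
  obtain ⟨hh0, hhlt⟩ := hh
  have hh1 : h ≤ 1 := le_of_lt (lt_of_lt_of_le hhlt (min_le_left _ _))
  have hsm : 10 * (T:ℝ) ^ 2 * h * (L₁ + 1) ≤ 1 := by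
    have h2 := lt_of_lt_of_le hhlt (min_le_right _ _)
    have hd : (0:ℝ) < 10 * (T:ℝ) ^ 2 * (L₁ + 1) := by positivity
    rw [lt_div_iff₀ hd] at h2
    nlinarith [h2]
  have hGc : ContDiff ℝ 1 (gradient U) := grad_contDiff hU
  have hG : ∀ x y, dist (gradient U x) (gradient U y) ≤ L₁ * dist x y := grad_lip hU hL₁ hb
  set Φ := leapfrog U h with hΦ
  -- main induction
  have key : ∀ k, k ≤ T →
      ContDiff ℝ 1 (fun p : EuclideanSpace ℝ (Fin d) => (Φ^[k] (q, p)).1) ∧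
      ContDiff ℝ 1 (fun p : EuclideanSpace ℝ (Fin d) => (Φ^[k] (q, p)).2) ∧
      (∀ x y, dist ((Φ^[k] (q, x)).1 - ((k:ℝ) * h) • x) ((Φ^[k] (q, y)).1 - ((k:ℝ) * h) • y)
        ≤ 5 * (k:ℝ) ^ 3 * h ^ 3 * L₁ * dist x y) ∧
      (∀ x y, dist ((Φ^[k] (q, x)).2 - x) ((Φ^[k] (q, y)).2 - y)
        ≤ 3 * (k:ℝ) ^ 2 * h ^ 2 * L₁ * dist x y) := by
    intro k
    induction k with
    | zero =>
      intro _
      refine ⟨?_, ?_, ?_, ?_⟩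
      · simp only [Function.iterate_zero_apply]; exact contDiff_const
      · simp only [Function.iterate_zero_apply]; exact contDiff_id
      · intro x y; simp
      · intro x y; simp
    | succ k ih =>
      intro hk1
      obtain ⟨cQ, cP, lQR, lPR⟩ := ih (Nat.le_of_succ_le hk1)
      have hKT : (k:ℝ) + 1 ≤ (T:ℝ) := by exact_mod_cast hk1
      obtain ⟨n1, n2, n3, n4⟩ := num_aux (Nat.cast_nonneg k) hKT hh0 hh1 hL₁ hsm
      -- Lipschitz constant for Q k itself
      have lQ : ∀ x y, dist ((Φ^[k] (q, x)).1) ((Φ^[k] (q, y)).1)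
          ≤ ((k:ℝ) * h + 5 * (k:ℝ) ^ 3 * h ^ 3 * L₁) * dist x y :=
        lip_of_residual _ _ _ (by positivity) lQR
      -- recurrences
      have eQ : ∀ p : EuclideanSpace ℝ (Fin d),
          (Φ^[k+1] (q, p)).1 = (Φ^[k] (q, p)).1
            + h • ((Φ^[k] (q, p)).2 - (h/2) • gradient U (Φ^[k] (q, p)).1) := by
        intro p; rw [hΦ, Function.iterate_succ_apply']; rfl
      have eP : ∀ p : EuclideanSpace ℝ (Fin d),
          (Φ^[k+1] (q, p)).2 = ((Φ^[k] (q, p)).2 - (h/2) • gradient U (Φ^[k] (q, p)).1)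
            - (h/2) • gradient U ((Φ^[k+1] (q, p)).1) := by
        intro p; rw [hΦ, Function.iterate_succ_apply']; rfl
      -- smoothness
      have cQ' : ContDiff ℝ 1 (fun p : EuclideanSpace ℝ (Fin d) => (Φ^[k+1] (q, p)).1) := by
        have e : (fun p : EuclideanSpace ℝ (Fin d) => (Φ^[k+1] (q, p)).1)
            = fun p => (Φ^[k] (q, p)).1
              + h • ((Φ^[k] (q, p)).2 - (h/2) • gradient U (Φ^[k] (q, p)).1) := funext eQ
        rw [e]
        exact cQ.add ((cP.sub ((hGc.comp cQ).const_smul _)).const_smul _)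
      have cP' : ContDiff ℝ 1 (fun p : EuclideanSpace ℝ (Fin d) => (Φ^[k+1] (q, p)).2) := by
        have e : (fun p : EuclideanSpace ℝ (Fin d) => (Φ^[k+1] (q, p)).2)
            = fun p => ((Φ^[k] (q, p)).2 - (h/2) • gradient U (Φ^[k] (q, p)).1)
              - (h/2) • gradient U ((Φ^[k+1] (q, p)).1) := funext eP
        rw [e]
        exact (cP.sub ((hGc.comp cQ).const_smul _)).sub ((hGc.comp cQ').const_smul _)
      -- residual bound for Q at k+1
      have lQR' : ∀ x y,
          dist ((Φ^[k+1] (q, x)).1 - (((k:ℝ)+1) * h) • x)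
            ((Φ^[k+1] (q, y)).1 - (((k:ℝ)+1) * h) • y)
          ≤ 5 * ((k:ℝ)+1) ^ 3 * h ^ 3 * L₁ * dist x y := by
        intro x y
        have ex : ∀ p : EuclideanSpace ℝ (Fin d),
            (Φ^[k+1] (q, p)).1 - (((k:ℝ)+1) * h) • p
              = ((Φ^[k] (q, p)).1 - ((k:ℝ) * h) • p)
                + (h • ((Φ^[k] (q, p)).2 - p)
                  + (-(h^2/2)) • gradient U ((Φ^[k] (q, p)).1)) := by
          intro p; rw [eQ p]; module
        rw [ex x, ex y]
        have b1 := lQR x y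
        have b2 : dist (h • ((Φ^[k] (q, x)).2 - x)) (h • ((Φ^[k] (q, y)).2 - y))
            ≤ h * (3 * (k:ℝ) ^ 2 * h ^ 2 * L₁ * dist x y) := by
          rw [dist_smul₀, Real.norm_eq_abs, abs_of_pos hh0]
          exact mul_le_mul_of_nonneg_left (lPR x y) hh0.le
        have b3 : dist ((-(h^2/2)) • gradient U ((Φ^[k] (q, x)).1))
            ((-(h^2/2)) • gradient U ((Φ^[k] (q, y)).1))
            ≤ h^2/2 * (L₁ * (((k:ℝ) * h + 5 * (k:ℝ) ^ 3 * h ^ 3 * L₁) * dist x y)) := by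
          rw [dist_smul₀, Real.norm_eq_abs, abs_neg, abs_of_pos (by positivity)]
          apply mul_le_mul_of_nonneg_left _ (by positivity)
          exact le_trans (hG _ _) (mul_le_mul_of_nonneg_left (lQ x y) hL₁)
        calc dist _ _
            ≤ dist ((Φ^[k] (q, x)).1 - ((k:ℝ) * h) • x) ((Φ^[k] (q, y)).1 - ((k:ℝ) * h) • y)
              + dist (h • ((Φ^[k] (q, x)).2 - x) + (-(h^2/2)) • gradient U ((Φ^[k] (q, x)).1))
                  (h • ((Φ^[k] (q, y)).2 - y) + (-(h^2/2)) • gradient U ((Φ^[k] (q, y)).1)) :=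
              dist_add_add_le _ _ _ _
          _ ≤ dist ((Φ^[k] (q, x)).1 - ((k:ℝ) * h) • x) ((Φ^[k] (q, y)).1 - ((k:ℝ) * h) • y)
              + (dist (h • ((Φ^[k] (q, x)).2 - x)) (h • ((Φ^[k] (q, y)).2 - y))
                + dist ((-(h^2/2)) • gradient U ((Φ^[k] (q, x)).1))
                    ((-(h^2/2)) • gradient U ((Φ^[k] (q, y)).1))) := by
              exact add_le_add le_rfl (dist_add_add_le _ _ _ _)
          _ ≤ 5 * (k:ℝ) ^ 3 * h ^ 3 * L₁ * dist x y
              + (h * (3 * (k:ℝ) ^ 2 * h ^ 2 * L₁ * dist x y)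
                + h^2/2 * (L₁ * (((k:ℝ) * h + 5 * (k:ℝ) ^ 3 * h ^ 3 * L₁) * dist x y))) := by
              exact add_le_add b1 (add_le_add b2 b3)
          _ ≤ 5 * ((k:ℝ)+1) ^ 3 * h ^ 3 * L₁ * dist x y := by
              nlinarith [mul_le_mul_of_nonneg_right n3 (dist_nonneg (x := x) (y := y))]
      -- Lipschitz constant for Q (k+1)
      have lQ' : ∀ x y, dist ((Φ^[k+1] (q, x)).1) ((Φ^[k+1] (q, y)).1)
          ≤ ((((k:ℝ)+1) * h) + 5 * ((k:ℝ)+1) ^ 3 * h ^ 3 * L₁) * dist x y :=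
        lip_of_residual _ _ _ (by positivity) lQR'
      -- residual bound for P at k+1
      have lPR' : ∀ x y,
          dist ((Φ^[k+1] (q, x)).2 - x) ((Φ^[k+1] (q, y)).2 - y)
          ≤ 3 * ((k:ℝ)+1) ^ 2 * h ^ 2 * L₁ * dist x y := by
        intro x y
        have ex : ∀ p : EuclideanSpace ℝ (Fin d),
            (Φ^[k+1] (q, p)).2 - p
              = ((Φ^[k] (q, p)).2 - p)
                + ((-(h/2)) • gradient U ((Φ^[k] (q, p)).1)
                  + (-(h/2)) • gradient U ((Φ^[k+1] (q, p)).1)) := by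
          intro p; rw [eP p]; module
        rw [ex x, ex y]
        have b1 := lPR x y
        have b2 : dist ((-(h/2)) • gradient U ((Φ^[k] (q, x)).1))
            ((-(h/2)) • gradient U ((Φ^[k] (q, y)).1))
            ≤ h/2 * (L₁ * (((k:ℝ) * h + 5 * (k:ℝ) ^ 3 * h ^ 3 * L₁) * dist x y)) := by
          rw [dist_smul₀, Real.norm_eq_abs, abs_neg, abs_of_pos (by positivity)]
          apply mul_le_mul_of_nonneg_left _ (by positivity)
          exact le_trans (hG _ _) (mul_le_mul_of_nonneg_left (lQ x y) hL₁)
        have b3 : dist ((-(h/2)) • gradient U ((Φ^[k+1] (q, x)).1))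
            ((-(h/2)) • gradient U ((Φ^[k+1] (q, y)).1))
            ≤ h/2 * (L₁ * (((((k:ℝ)+1) * h) + 5 * ((k:ℝ)+1) ^ 3 * h ^ 3 * L₁) * dist x y)) := by
          rw [dist_smul₀, Real.norm_eq_abs, abs_neg, abs_of_pos (by positivity)]
          apply mul_le_mul_of_nonneg_left _ (by positivity)
          exact le_trans (hG _ _) (mul_le_mul_of_nonneg_left (lQ' x y) hL₁)
        calc dist _ _
            ≤ dist ((Φ^[k] (q, x)).2 - x) ((Φ^[k] (q, y)).2 - y)
              + (dist ((-(h/2)) • gradient U ((Φ^[k] (q, x)).1))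
                  ((-(h/2)) • gradient U ((Φ^[k] (q, y)).1))
                + dist ((-(h/2)) • gradient U ((Φ^[k+1] (q, x)).1))
                    ((-(h/2)) • gradient U ((Φ^[k+1] (q, y)).1))) :=
              le_trans (dist_add_add_le _ _ _ _) (add_le_add le_rfl (dist_add_add_le _ _ _ _))
          _ ≤ 3 * (k:ℝ) ^ 2 * h ^ 2 * L₁ * dist x y
              + (h/2 * (L₁ * (((k:ℝ) * h + 5 * (k:ℝ) ^ 3 * h ^ 3 * L₁) * dist x y))
                + h/2 * (L₁ * (((((k:ℝ)+1) * h) + 5 * ((k:ℝ)+1) ^ 3 * h ^ 3 * L₁) * dist x y))) :=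
              add_le_add b1 (add_le_add b2 b3)
          _ ≤ 3 * ((k:ℝ)+1) ^ 2 * h ^ 2 * L₁ * dist x y := by
              nlinarith [mul_le_mul_of_nonneg_right n4 (dist_nonneg (x := x) (y := y))]
      refine ⟨cQ', cP', ?_, ?_⟩
      · intro x y
        have := lQR' x y
        push_cast
        convert this using 3
      · intro x y
        have := lPR' x y
        push_cast
        convert this using 3
  obtain ⟨cQT, -, lRT, -⟩ := key T le_rfl
  set s : ℝ := (T:ℝ) * h with hs_def
  have hts : 0 < s := mul_pos hT0 hh0
  have hne : s ≠ 0 := hts.ne'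
  set F : EuclideanSpace ℝ (Fin d) → EuclideanSpace ℝ (Fin d)
    := fun p => (Φ^[T] (q, p)).1 with hF
  have hRlip : ∀ x y, dist (F x - s • x) (F y - s • y) ≤ s/2 * dist x y := by
    intro x y
    refine le_trans (lRT x y) ?_
    have h5 : 10 * (T:ℝ)^2 * h^2 * L₁ ≤ 1 := by nlinarith [hsm, mul_pos (mul_pos (by positivity : (0:ℝ) < 10 * (T:ℝ)^2) hh0) hh0]
    have h6 : 5 * (T:ℝ)^3 * h^3 * L₁ ≤ s/2 := by
      rw [hs_def]
      nlinarith [mul_le_mul_of_nonneg_left h5 (by positivity : (0:ℝ) ≤ (T:ℝ) * h / 2)]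
    exact mul_le_mul_of_nonneg_right h6 dist_nonneg
  -- injectivity
  have hinj : Function.Injective F := by
    intro a b hab
    have e : (F a - s • a) - (F b - s • b) = -(s • a - s • b) := by rw [hab]; module
    have h1 : dist (s • a) (s • b) ≤ s/2 * dist a b := by
      rw [dist_eq_norm, ← norm_neg, ← e]
      have h2 := hRlip a b; rwa [dist_eq_norm] at h2
    rw [dist_smul₀, Real.norm_eq_abs, abs_of_pos hts] at h1
    by_contra hne2
    have hd : 0 < dist a b := dist_pos.mpr hne2
    linarith [h1, mul_pos (half_pos hts) hd]
  -- surjectivity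
  have hsurj : Function.Surjective F := by
    intro y
    set Ψ : EuclideanSpace ℝ (Fin d) → EuclideanSpace ℝ (Fin d)
      := fun p => s⁻¹ • (y - (F p - s • p)) with hΨ
    have lipΨ : LipschitzWith (1/2 : NNReal) Ψ := by
      apply LipschitzWith.of_dist_le_mul
      intro a b
      have e : dist (Ψ a) (Ψ b) = s⁻¹ * dist (F a - s • a) (F b - s • b) := by
        rw [hΨ]
        simp only
        rw [dist_smul₀, Real.norm_eq_abs, abs_of_pos (inv_pos.mpr hts)]
        congr 1
        rw [dist_eq_norm, dist_eq_norm]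
        have e2 : (y - (F a - s • a)) - (y - (F b - s • b))
            = -((F a - s • a) - (F b - s • b)) := by module
        rw [e2, norm_neg]
      rw [e]
      have h2 := hRlip a b
      have : s⁻¹ * dist (F a - s • a) (F b - s • b) ≤ s⁻¹ * (s/2 * dist a b) :=
        mul_le_mul_of_nonneg_left h2 (by positivity)
      have e3 : s⁻¹ * (s/2) = 1/2 := by field_simp
      calc s⁻¹ * dist (F a - s • a) (F b - s • b) ≤ s⁻¹ * (s/2 * dist a b) := this
        _ = ((1/2 : NNReal) : ℝ) * dist a b := by
            rw [← mul_assoc, e3]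
            norm_num
    have hcontr : ContractingWith (1/2 : NNReal) Ψ := ⟨by rw [← NNReal.coe_lt_coe]; norm_num, lipΨ⟩
    have : Nonempty (EuclideanSpace ℝ (Fin d)) := ⟨0⟩
    set p' := ContractingWith.fixedPoint Ψ hcontr with hp'
    have hfix : Ψ p' = p' := hcontr.fixedPoint_isFixedPt
    refine ⟨p', ?_⟩
    have h1 : s • Ψ p' = y - (F p' - s • p') := smul_inv_smul₀ hne _
    rw [hfix] at h1
    have h4 : F p' = (y - (F p' - s • p')) + (F p' - s • p') := by rw [← h1]; module
    rw [sub_add_cancel] at h4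
    exact h4
  have hbij : Function.Bijective F := ⟨hinj, hsurj⟩
  set eqv := Equiv.ofBijective F hbij with heqv
  have hRc : ContDiff ℝ 1 (fun p : EuclideanSpace ℝ (Fin d) => F p - s • p) :=
    cQT.sub (contDiff_id.const_smul s)
  have hgsmooth : ContDiff ℝ 1 (⇑eqv.symm) := by
    rw [contDiff_iff_contDiffAt]
    intro y
    set p₀ := eqv.symm y with hp₀
    have hy : F p₀ = y := eqv.apply_symm_apply y
    set DR := fderiv ℝ (fun p : EuclideanSpace ℝ (Fin d) => F p - s • p) p₀ with hDRdef
    have hDR : ‖DR‖ ≤ s/2 := by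
      apply norm_fderiv_le_of_lip' ℝ (by positivity)
      refine Filter.Eventually.of_forall (fun x => ?_)
      have h2 := hRlip x p₀
      rw [dist_eq_norm, dist_eq_norm] at h2
      exact h2
    have hD : HasFDerivAt F (s • (1 : EuclideanSpace ℝ (Fin d) →L[ℝ] EuclideanSpace ℝ (Fin d))
        + DR) p₀ := by
      have h1 : HasFDerivAt (fun p : EuclideanSpace ℝ (Fin d) => s • p)
          (s • (1 : EuclideanSpace ℝ (Fin d) →L[ℝ] EuclideanSpace ℝ (Fin d))) p₀ :=
        (hasFDerivAt_id p₀).const_smul s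
      have h2 : HasFDerivAt (fun p : EuclideanSpace ℝ (Fin d) => F p - s • p) DR p₀ :=
        ((hRc.differentiable one_ne_zero) p₀).hasFDerivAt
      have h3 := h1.add h2
      exact h3.congr_of_eventuallyEq (Filter.Eventually.of_forall fun p => by simp only [Pi.add_apply]; module)
    have hu : ‖(-(s⁻¹)) • DR‖ < 1 := by
      rw [norm_smul, Real.norm_eq_abs, abs_neg, abs_of_pos (inv_pos.mpr hts)]
      calc s⁻¹ * ‖DR‖ ≤ s⁻¹ * (s/2) := mul_le_mul_of_nonneg_left hDR (by positivity)
        _ = 1/2 := by field_simp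
        _ < 1 := by norm_num
    set w := Units.oneSub ((-(s⁻¹)) • DR) hu with hw
    have hwv : s • (w.val : EuclideanSpace ℝ (Fin d) →L[ℝ] EuclideanSpace ℝ (Fin d))
        = s • (1 : EuclideanSpace ℝ (Fin d) →L[ℝ] EuclideanSpace ℝ (Fin d)) + DR := by
      have hval : (w.val : EuclideanSpace ℝ (Fin d) →L[ℝ] EuclideanSpace ℝ (Fin d))
          = 1 + s⁻¹ • DR := by
        show (1 : EuclideanSpace ℝ (Fin d) →L[ℝ] EuclideanSpace ℝ (Fin d))
          - (-(s⁻¹)) • DR = _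
        module
      rw [hval, smul_add, smul_inv_smul₀ hne]
    have hunit : IsUnit (s • (1 : EuclideanSpace ℝ (Fin d) →L[ℝ] EuclideanSpace ℝ (Fin d))
        + DR) := by
      rw [← hwv]
      convert ((isUnit_iff_ne_zero.mpr hne).map
        (algebraMap ℝ (EuclideanSpace ℝ (Fin d) →L[ℝ] EuclideanSpace ℝ (Fin d)))).mul w.isUnit using 1
      exact Eq.symm (ContinuousLinearMap.ext (congrFun rfl))
    obtain ⟨w', hw'⟩ := hunit
    set e := ContinuousLinearEquiv.ofUnit w' with he_def
    have he : (e : EuclideanSpace ℝ (Fin d) →L[ℝ] EuclideanSpace ℝ (Fin d))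
        = s • (1 : EuclideanSpace ℝ (Fin d) →L[ℝ] EuclideanSpace ℝ (Fin d)) + DR := by
      rw [← hw']; rfl
    have hD' : HasFDerivAt F
        (e : EuclideanSpace ℝ (Fin d) →L[ℝ] EuclideanSpace ℝ (Fin d)) p₀ := by
      rw [he]; exact hD
    have hFat : ContDiffAt ℝ 1 F p₀ := cQT.contDiffAt
    have hlinvCD : ContDiffAt ℝ 1 (hFat.localInverse hD' one_ne_zero) (F p₀) :=
      hFat.to_localInverse hD' one_ne_zero
    have hev : ∀ᶠ z in nhds (F p₀), F ((hFat.localInverse hD' one_ne_zero) z) = z :=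
      (hFat.hasStrictFDerivAt' hD' one_ne_zero).eventually_right_inverse
    have heq : (⇑eqv.symm) =ᶠ[nhds (F p₀)] (hFat.localInverse hD' one_ne_zero) := by
      refine hev.mono (fun z hz => ?_)
      conv_lhs => rw [← hz]
      exact eqv.symm_apply_apply _
    have hfin := hlinvCD.congr_of_eventuallyEq heq
    rwa [hy] at hfin
  refine ⟨⇑eqv.symm, cQT, hgsmooth, fun p => eqv.symm_apply_apply p,
    fun y => eqv.apply_symm_apply y⟩
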